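/- arXiv:1501.00837 — 3 statements merged into one kernel-verified Lean document; each statement's English description precedes it below -/
import Mathlib

section
/- Every x ∈ 𝒳 satisfies |x(t + h) − x(t)| ≤ √2·ω(h) for all h ∈ (0,1) and t ∈ [0, 1 − h]. In particular, every x ∈ 𝒳 is Hölder continuous with exponent 1/2. -/
noncomputable def e00 (t : ℝ) : ℝ := max (min t (1 - t)) 0

noncomputable def e (m : ℕ) (k : ℤ) (t : ℝ) : ℝ :=
  (2 : ℝ) ^ (-(m : ℝ) / 2) * e00 ((2 : ℝ) ^ m * t - k)

def mathcalX : Set (ℝ → ℝ) :=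
  {x | ∃ θ : ℕ → ℕ → ℝ, (∀ m k, θ m k = 1 ∨ θ m k = -1) ∧
    ∀ t, x t = ∑' m : ℕ, ∑ k ∈ Finset.range (2 ^ m), θ m k * e m k t}

noncomputable def ν (h : ℝ) : ℤ := ⌊-Real.logb 2 h⌋

noncomputable def ω (h : ℝ) : ℝ :=
  (1 + 1 / Real.sqrt 2) * h * (2 : ℝ) ^ ((ν h : ℝ) / 2)
    + (1 / 3) * (2 * Real.sqrt 2 + 2) * (2 : ℝ) ^ (-(ν h : ℝ) / 2)

set_option maxHeartbeats 1000000

lemma e00_nonneg (x : ℝ) : 0 ≤ e00 x := le_max_right _ _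

lemma e00_le_half (x : ℝ) : e00 x ≤ 1/2 := by
  unfold e00
  rcases le_total x (1/2) with h | h
  · exact max_le (le_trans (min_le_left _ _) h) (by norm_num)
  · exact max_le (le_trans (min_le_right _ _) (by linarith)) (by norm_num)

lemma e00_zero_of_nonpos {x : ℝ} (hx : x ≤ 0) : e00 x = 0 := by
  unfold e00
  exact max_eq_right (le_trans (min_le_left _ _) hx)

lemma e00_zero_of_one_le {x : ℝ} (hx : 1 ≤ x) : e00 x = 0 := by
  unfold e00
  exact max_eq_right (le_trans (min_le_right _ _) (by linarith))

lemma e00_le_self {x : ℝ} (hx : 0 ≤ x) : e00 x ≤ x :=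
  max_le (min_le_left _ _) hx

lemma e00_le_one_sub {x : ℝ} (hx : x ≤ 1) : e00 x ≤ 1 - x :=
  max_le (min_le_right _ _) (by linarith)

lemma e00_lip (a b : ℝ) : |e00 a - e00 b| ≤ |a - b| := by
  rw [abs_sub_le_iff]
  constructor
  · rcases le_total (min a (1-a)) 0 with h | h
    · have h0 : e00 a = 0 := max_eq_right h
      have := e00_nonneg b; have := abs_nonneg (a - b); linarith
    · have ha : e00 a ≤ min a (1 - a) := le_of_eq (max_eq_left h)
      have hb : min b (1-b) ≤ e00 b := le_max_left _ _
      rcases min_cases b (1-b) with ⟨h1,_⟩ | ⟨h1,_⟩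
      · have : e00 a ≤ a := le_trans ha (min_le_left _ _)
        have := abs_nonneg (a-b); have := le_abs_self (a - b); linarith [h1 ▸ hb]
      · have : e00 a ≤ 1 - a := le_trans ha (min_le_right _ _)
        have := neg_le_abs (a - b); linarith [h1 ▸ hb]
  · rcases le_total (min b (1-b)) 0 with h | h
    · have h0 : e00 b = 0 := max_eq_right h
      have := e00_nonneg a; have := abs_nonneg (a - b); linarith
    · have hb : e00 b ≤ min b (1 - b) := le_of_eq (max_eq_left h)
      have ha : min a (1-a) ≤ e00 a := le_max_left _ _
      rcases min_cases a (1-a) with ⟨h1,_⟩ | ⟨h1,_⟩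
      · have : e00 b ≤ b := le_trans hb (min_le_left _ _)
        have := neg_le_abs (a - b); linarith [h1 ▸ ha]
      · have : e00 b ≤ 1 - b := le_trans hb (min_le_right _ _)
        have := le_abs_self (a - b); linarith [h1 ▸ ha]

lemma sum_ite_le {c : ℝ} (hc : 0 ≤ c) (n : ℕ) (P : ℕ → Prop) [DecidablePred P]
    (hP : ∀ k l, P k → P l → k = l) :
    ∑ k ∈ Finset.range n, (if P k then c else 0) ≤ c := by
  induction n with
  | zero => simpa using hc
  | succ n ih =>
      rw [Finset.sum_range_succ]
      by_cases hn : P n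
      · have : ∑ k ∈ Finset.range n, (if P k then c else 0) = 0 := by
          apply Finset.sum_eq_zero
          intro k hk
          rw [if_neg]
          intro hPk
          exact absurd (hP k n hPk hn) (Nat.ne_of_lt (Finset.mem_range.mp hk))
        rw [this, if_pos hn]; linarith
      · rw [if_neg hn]; linarith

noncomputable def Gs (θ : ℕ → ℝ) (n : ℕ) (s : ℝ) : ℝ :=
  ∑ k ∈ Finset.range n, θ k * e00 (s - k)

lemma Gs_abs_le {θ : ℕ → ℝ} (hθ : ∀ k, |θ k| ≤ 1) (n : ℕ) (s : ℝ) :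
    |Gs θ n s| ≤ e00 (Int.fract s) := by
  have key : ∀ k ∈ Finset.range n,
      |θ k * e00 (s - k)| ≤ if ((k : ℤ) = ⌊s⌋) then e00 (Int.fract s) else 0 := by
    intro k _
    by_cases hk : ((k : ℤ) = ⌊s⌋)
    · rw [if_pos hk]
      have hs : s - (k : ℝ) = Int.fract s := by
        rw [Int.fract]
        congr 1
        exact_mod_cast congrArg (fun z : ℤ => (z : ℝ)) hk
      rw [hs, abs_mul, abs_of_nonneg (e00_nonneg _)]
      nlinarith [hθ k, e00_nonneg (Int.fract s), abs_nonneg (θ k)]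
    · rw [if_neg hk]
      have h0 : e00 (s - k) = 0 := by
        rcases lt_or_gt_of_ne hk with hlt | hgt
        · apply e00_zero_of_one_le
          have h1 : (k : ℤ) + 1 ≤ ⌊s⌋ := hlt
          have h2 : ((k : ℝ) + 1) ≤ (⌊s⌋ : ℝ) := by exact_mod_cast h1
          have := Int.floor_le s
          linarith
        · apply e00_zero_of_nonpos
          have h1 : ⌊s⌋ + 1 ≤ (k : ℤ) := hgt
          have h2 : ((⌊s⌋ : ℝ) + 1) ≤ (k : ℝ) := by exact_mod_cast h1
          have := Int.lt_floor_add_one s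
          linarith
      rw [h0, mul_zero, abs_zero]
  calc |Gs θ n s| ≤ ∑ k ∈ Finset.range n, |θ k * e00 (s - k)| :=
        Finset.abs_sum_le_sum_abs _ _
    _ ≤ ∑ k ∈ Finset.range n, (if ((k : ℤ) = ⌊s⌋) then e00 (Int.fract s) else 0) :=
        Finset.sum_le_sum key
    _ ≤ e00 (Int.fract s) := by
        apply sum_ite_le (e00_nonneg _)
        intro k l hk hl
        exact_mod_cast hk.trans hl.symm

lemma Gs_diff_le {θ : ℕ → ℝ} (hθ : ∀ k, |θ k| ≤ 1) (n : ℕ) {s s' : ℝ} (hss' : s ≤ s') :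
    |Gs θ n s' - Gs θ n s| ≤ s' - s := by
  by_cases hfl : ⌊s⌋ = ⌊s'⌋
  · have hGs : Gs θ n s' - Gs θ n s
        = ∑ k ∈ Finset.range n, (θ k * e00 (s' - k) - θ k * e00 (s - k)) := by
      rw [Finset.sum_sub_distrib]; rfl
    rw [hGs]
    have key : ∀ k ∈ Finset.range n,
        |θ k * e00 (s' - k) - θ k * e00 (s - k)| ≤
          if ((k : ℤ) = ⌊s⌋) then (s' - s) else 0 := by
      intro k _
      rw [← mul_sub, abs_mul]
      by_cases hk : ((k : ℤ) = ⌊s⌋)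
      · rw [if_pos hk]
        have h1 : |e00 (s' - k) - e00 (s - k)| ≤ |s' - s| := by
          have := e00_lip (s' - k) (s - k)
          simpa using this
        rw [abs_of_nonneg (by linarith : (0:ℝ) ≤ s' - s)] at h1
        nlinarith [hθ k, abs_nonneg (e00 (s' - k) - e00 (s - k)), abs_nonneg (θ k)]
      · rw [if_neg hk]
        rcases lt_or_gt_of_ne hk with hlt | hgt
        · have h1 : (k : ℤ) + 1 ≤ ⌊s⌋ := hlt
          have h2 : ((k : ℝ) + 1) ≤ (⌊s⌋ : ℝ) := by exact_mod_cast h1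
          have h3 := Int.floor_le s
          have e1 : e00 (s - k) = 0 := e00_zero_of_one_le (by linarith)
          have e2 : e00 (s' - k) = 0 := e00_zero_of_one_le (by linarith)
          rw [e1, e2]; simp
        · have h0 : ⌊s⌋ + 1 ≤ (k : ℤ) := hgt
          have h1 : ⌊s'⌋ + 1 ≤ (k : ℤ) := hfl ▸ h0
          have h2 : ((⌊s'⌋ : ℝ) + 1) ≤ (k : ℝ) := by exact_mod_cast h1
          have h3 := Int.lt_floor_add_one s'
          have e1 : e00 (s - k) = 0 := e00_zero_of_nonpos (by linarith)
          have e2 : e00 (s' - k) = 0 := e00_zero_of_nonpos (by linarith)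
          rw [e1, e2]; simp
    calc |∑ k ∈ Finset.range n, (θ k * e00 (s' - k) - θ k * e00 (s - k))|
        ≤ ∑ k ∈ Finset.range n, |θ k * e00 (s' - k) - θ k * e00 (s - k)| :=
          Finset.abs_sum_le_sum_abs _ _
      _ ≤ ∑ k ∈ Finset.range n, (if ((k : ℤ) = ⌊s⌋) then (s' - s) else 0) :=
          Finset.sum_le_sum key
      _ ≤ s' - s := by
          apply sum_ite_le (by linarith)
          intro k l hk hl
          exact_mod_cast hk.trans hl.symm
  · have hlt : ⌊s⌋ < ⌊s'⌋ := lt_of_le_of_ne (Int.floor_le_floor hss') hfl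
    have h2 : ((⌊s⌋ : ℝ) + 1) ≤ (⌊s'⌋ : ℝ) := by exact_mod_cast hlt
    have hf1 : |Gs θ n s'| ≤ e00 (Int.fract s') := Gs_abs_le hθ n s'
    have hf2 : |Gs θ n s| ≤ e00 (Int.fract s) := Gs_abs_le hθ n s
    have hb1 : e00 (Int.fract s') ≤ Int.fract s' := e00_le_self (Int.fract_nonneg _)
    have hb2 : e00 (Int.fract s) ≤ 1 - Int.fract s := e00_le_one_sub (le_of_lt (Int.fract_lt_one _))
    have hfr1 : Int.fract s' = s' - ⌊s'⌋ := rfl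
    have hfr2 : Int.fract s = s - ⌊s⌋ := rfl
    have habs := abs_sub (Gs θ n s') (Gs θ n s)
    have h1 := abs_sub_abs_le_abs_sub (Gs θ n s') (Gs θ n s)
    calc |Gs θ n s' - Gs θ n s| ≤ |Gs θ n s'| + |Gs θ n s| := abs_sub _ _
      _ ≤ s' - s := by rw [hfr1] at hf1 hb1; rw [hfr2] at hf2 hb2; linarith

lemma e00_fract_double_le (y : ℝ) : e00 (Int.fract (2*y)) ≤ 1 - 2 * e00 (Int.fract y) := by
  set z := Int.fract y with hz
  have hz0 : 0 ≤ z := Int.fract_nonneg y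
  have hz1 : z < 1 := Int.fract_lt_one y
  have h2y : Int.fract (2*y) = Int.fract (2*z) := by
    have : (2:ℝ)*y = 2*z + ((2*⌊y⌋ : ℤ) : ℝ) := by
      rw [hz, Int.fract]; push_cast; ring
    rw [this, Int.fract_add_intCast]
  rw [h2y]
  rcases lt_or_ge z (1/2) with hc | hc
  · have : Int.fract (2*z) = 2*z := Int.fract_eq_self.mpr ⟨by linarith, by linarith⟩
    rw [this]
    have h1 : e00 (2*z) ≤ 1 - 2*z := e00_le_one_sub (by linarith)
    have h2 : e00 z ≤ z := e00_le_self hz0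
    linarith
  · have h21 : Int.fract (2*z) = 2*z - 1 := by
      have e1 : Int.fract (2*z) = Int.fract (2*z - 1) := by
        conv_lhs => rw [show (2:ℝ)*z = (2*z - 1) + ((1:ℤ):ℝ) by push_cast; ring]
        rw [Int.fract_add_intCast]
      rw [e1, Int.fract_eq_self.mpr ⟨by linarith, by linarith⟩]
    rw [h21]
    have h1 : e00 (2*z - 1) ≤ 2*z - 1 := e00_le_self (by linarith)
    have h2 : e00 z ≤ 1 - z := e00_le_one_sub (le_of_lt hz1)
    linarith

lemma takagi_bound (n : ℕ) (y : ℝ) :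
    ∑ j ∈ Finset.range n, ((Real.sqrt 2)⁻¹) ^ j * e00 (Int.fract ((2:ℝ)^j * y))
      ≤ (2 + Real.sqrt 2)/3 - max (1/3 - e00 (Int.fract y)) 0 := by
  have hs2 : Real.sqrt 2 ^ 2 = 2 := Real.sq_sqrt (by norm_num)
  have hs2one : 1 ≤ Real.sqrt 2 := by nlinarith [Real.sqrt_nonneg 2]
  have hs2pos : 0 < Real.sqrt 2 := by linarith
  have hqM : (Real.sqrt 2)⁻¹ * ((2 + Real.sqrt 2)/3) = (2 + Real.sqrt 2)/3 - 1/3 := by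
    rw [inv_mul_eq_div, div_eq_iff (ne_of_gt hs2pos)]
    nlinarith
  induction n generalizing y with
  | zero =>
      simp only [Finset.range_zero, Finset.sum_empty]
      have h1 : max (1/3 - e00 (Int.fract y)) 0 ≤ 1/3 :=
        max_le (by linarith [e00_nonneg (Int.fract y)]) (by norm_num)
      linarith
  | succ n ih =>
      rw [Finset.sum_range_succ']
      have hrw : ∀ j : ℕ, ((Real.sqrt 2)⁻¹) ^ (j+1) * e00 (Int.fract ((2:ℝ)^(j+1) * y))
          = (Real.sqrt 2)⁻¹ * (((Real.sqrt 2)⁻¹) ^ j * e00 (Int.fract ((2:ℝ)^j * (2*y)))) := by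
        intro j
        have : (2:ℝ)^(j+1) * y = (2:ℝ)^j * (2*y) := by ring
        rw [this, pow_succ]; ring
      simp only [hrw]
      rw [← Finset.mul_sum]
      have hih := ih (2*y)
      set u := e00 (Int.fract y) with hu
      set u' := e00 (Int.fract (2*y)) with hu'
      have hu0 : 0 ≤ u := e00_nonneg _
      have hu'0 : 0 ≤ u' := e00_nonneg _
      have huu' : u' ≤ 1 - 2*u := e00_fract_double_le y
      have hq0 : (0:ℝ) ≤ (Real.sqrt 2)⁻¹ := by positivity
      have step : (Real.sqrt 2)⁻¹ * ∑ j ∈ Finset.range n,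
            ((Real.sqrt 2)⁻¹) ^ j * e00 (Int.fract ((2:ℝ)^j * (2*y)))
          ≤ (Real.sqrt 2)⁻¹ * ((2 + Real.sqrt 2)/3 - max (1/3 - u') 0) :=
        mul_le_mul_of_nonneg_left hih hq0
      have hpow0 : ((Real.sqrt 2)⁻¹) ^ (0:ℕ) * e00 (Int.fract ((2:ℝ)^(0:ℕ) * y)) = u := by
        simp [hu]
      rw [hpow0]
      have hfin : (Real.sqrt 2)⁻¹ * ((2 + Real.sqrt 2)/3 - max (1/3 - u') 0) + u
          ≤ (2 + Real.sqrt 2)/3 - max (1/3 - u) 0 := by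
        rw [mul_sub, hqM]
        rcases le_or_gt u (1/3) with hc | hc
        · have hm : max (1/3 - u) 0 = 1/3 - u := max_eq_left (by linarith)
          have hm' : 0 ≤ max (1/3 - u') 0 := le_max_right _ _
          nlinarith
        · have hm : max (1/3 - u) 0 = 0 := max_eq_right (by linarith)
          have hm' : 1/3 - u' ≤ max (1/3 - u') 0 := le_max_left _ _
          have key : (2:ℝ) * (Real.sqrt 2)⁻¹ * (u - 1/3) ≥ u - 1/3 := by
            rw [ge_iff_le, ← sub_nonneg]
            have h2q : (2:ℝ) * (Real.sqrt 2)⁻¹ = Real.sqrt 2 := by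
              field_simp
              exact (Real.sq_sqrt (by norm_num)).symm
            rw [h2q]
            nlinarith
          have h1 : 2*(u - 1/3) ≤ 1/3 - u' := by linarith
          have h2 : (Real.sqrt 2)⁻¹ * (2*(u-1/3)) ≤ (Real.sqrt 2)⁻¹ * max (1/3 - u') 0 :=
            mul_le_mul_of_nonneg_left (by linarith) hq0
          nlinarith
      linarith

lemma sqrt2_sq : Real.sqrt 2 ^ 2 = 2 := Real.sq_sqrt (by norm_num)
lemma sqrt2_one_lt : 1 < Real.sqrt 2 := by nlinarith [Real.sqrt_nonneg 2, sqrt2_sq]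
lemma sqrt2_pos : 0 < Real.sqrt 2 := by linarith [sqrt2_one_lt]
lemma q_lt_one : (Real.sqrt 2)⁻¹ < 1 := by
  rw [inv_lt_one_iff₀]; right; exact sqrt2_one_lt
lemma q_nonneg : (0:ℝ) ≤ (Real.sqrt 2)⁻¹ := by positivity
lemma two_mul_q : 2 * (Real.sqrt 2)⁻¹ = Real.sqrt 2 := by
  field_simp
  exact (Real.sq_sqrt (by norm_num)).symm

lemma q_rpow : ((Real.sqrt 2)⁻¹ : ℝ) = (2:ℝ) ^ (-(1:ℝ)/2) := by
  rw [show (-(1:ℝ)/2) = -(1/2 : ℝ) by norm_num, Real.rpow_neg (by norm_num : (0:ℝ) ≤ 2),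
    ← Real.sqrt_eq_rpow]

lemma cm_eq (m : ℕ) : (2:ℝ) ^ (-(m:ℝ)/2) = ((Real.sqrt 2)⁻¹) ^ m := by
  rw [q_rpow, ← Real.rpow_natCast ((2:ℝ) ^ (-(1:ℝ)/2)) m, ← Real.rpow_mul (by norm_num : (0:ℝ) ≤ 2)]
  congr 1; ring

lemma pow_half_eq (N : ℕ) : (2:ℝ) ^ ((N:ℝ)/2) = (Real.sqrt 2) ^ N := by
  rw [show ((N:ℝ)/2) = (1/2:ℝ) * N by ring, Real.rpow_mul (by norm_num : (0:ℝ) ≤ 2),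
    Real.rpow_natCast, ← Real.sqrt_eq_rpow]

lemma pow_neg_half_eq (N : ℕ) : (2:ℝ) ^ (-(N:ℝ)/2) = ((Real.sqrt 2)⁻¹) ^ N := by
  rw [show (-(N:ℝ)/2) = (-(1:ℝ)/2) * N by ring, Real.rpow_mul (by norm_num : (0:ℝ) ≤ 2),
    Real.rpow_natCast, ← q_rpow]

noncomputable def Ff (θ : ℕ → ℕ → ℝ) (m : ℕ) (u : ℝ) : ℝ :=
  ∑ k ∈ Finset.range (2^m), θ m k * e m k u

lemma Ff_eq (θ : ℕ → ℕ → ℝ) (m : ℕ) (u : ℝ) :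
    Ff θ m u = ((Real.sqrt 2)⁻¹) ^ m * Gs (θ m) (2^m) ((2:ℝ)^m * u) := by
  unfold Ff Gs
  rw [Finset.mul_sum]
  apply Finset.sum_congr rfl
  intro k _
  unfold e
  rw [cm_eq]
  push_cast
  ring

lemma level_sup {θ : ℕ → ℕ → ℝ} (hθ : ∀ m k, |θ m k| ≤ 1) (m : ℕ) (u : ℝ) :
    |Ff θ m u| ≤ ((Real.sqrt 2)⁻¹) ^ m * e00 (Int.fract ((2:ℝ)^m * u)) := by
  rw [Ff_eq, abs_mul, abs_of_nonneg (pow_nonneg q_nonneg m)]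
  exact mul_le_mul_of_nonneg_left (Gs_abs_le (hθ m) _ _) (pow_nonneg q_nonneg m)

lemma level_lip {θ : ℕ → ℕ → ℝ} (hθ : ∀ m k, |θ m k| ≤ 1) (m : ℕ) {t h : ℝ} (hh : 0 ≤ h) :
    |Ff θ m (t + h) - Ff θ m t| ≤ (Real.sqrt 2) ^ m * h := by
  rw [Ff_eq, Ff_eq, ← mul_sub, abs_mul, abs_of_nonneg (pow_nonneg q_nonneg m)]
  have hle : (2:ℝ)^m * t ≤ (2:ℝ)^m * (t + h) := by
    have : (0:ℝ) < (2:ℝ)^m := by positivity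
    nlinarith
  have hG := Gs_diff_le (hθ m) (2^m) hle
  calc ((Real.sqrt 2)⁻¹) ^ m * |Gs (θ m) (2^m) ((2:ℝ)^m * (t+h)) - Gs (θ m) (2^m) ((2:ℝ)^m * t)|
      ≤ ((Real.sqrt 2)⁻¹) ^ m * ((2:ℝ)^m * (t+h) - (2:ℝ)^m * t) :=
        mul_le_mul_of_nonneg_left hG (pow_nonneg q_nonneg m)
    _ = (Real.sqrt 2) ^ m * h := by
        rw [show (2:ℝ)^m * (t+h) - (2:ℝ)^m * t = (2:ℝ)^m * h by ring, ← mul_assoc,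
          ← mul_pow, show ((Real.sqrt 2)⁻¹) * 2 = Real.sqrt 2 by rw [mul_comm]; exact two_mul_q]

lemma part1 : ∀ x ∈ mathcalX, ∀ h ∈ Set.Ioo (0 : ℝ) 1, ∀ t ∈ Set.Icc (0 : ℝ) (1 - h),
    |x (t + h) - x t| ≤ Real.sqrt 2 * ω h := by
  rintro x ⟨θ, hθs, hxe⟩ h ⟨hh0, hh1⟩ t ⟨ht0, ht1⟩
  have hθ1 : ∀ m k, |θ m k| ≤ 1 := by
    intro m k; rcases hθs m k with h' | h' <;> rw [h'] <;> norm_num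
  set s2 := Real.sqrt 2 with hs2def
  set q := (Real.sqrt 2)⁻¹ with hqdef
  have hs2 : s2^2 = 2 := sqrt2_sq
  have hs2pos : 0 < s2 := sqrt2_pos
  have hs2one : 1 < s2 := sqrt2_one_lt
  have hq0 : (0:ℝ) ≤ q := q_nonneg
  have hq1 : q < 1 := q_lt_one
  have hxe' : ∀ u, x u = ∑' m, Ff θ m u := hxe
  -- summability
  have hgeom : Summable (fun m : ℕ => q ^ m) := summable_geometric_of_lt_one hq0 hq1
  have hFb : ∀ m u, |Ff θ m u| ≤ q ^ m * (1/2) := by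
    intro m u
    calc |Ff θ m u| ≤ q ^ m * e00 (Int.fract ((2:ℝ)^m * u)) := level_sup hθ1 m u
      _ ≤ q ^ m * (1/2) :=
        mul_le_mul_of_nonneg_left (e00_le_half _) (pow_nonneg hq0 m)
  have hFsum : ∀ u, Summable (fun m => Ff θ m u) := by
    intro u
    apply Summable.of_norm_bounded hgeom
    intro m
    rw [Real.norm_eq_abs]
    calc |Ff θ m u| ≤ q ^ m * (1/2) := hFb m u
      _ ≤ q ^ m := by nlinarith [pow_nonneg hq0 m]
  have hD : Summable (fun m => |Ff θ m (t + h) - Ff θ m t|) := by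
    apply Summable.of_norm_bounded hgeom
    intro m
    rw [Real.norm_eq_abs, abs_abs]
    calc |Ff θ m (t + h) - Ff θ m t| ≤ |Ff θ m (t+h)| + |Ff θ m t| := abs_sub _ _
      _ ≤ q ^ m * (1/2) + q ^ m * (1/2) := add_le_add (hFb _ _) (hFb _ _)
      _ = q ^ m := by ring
  -- N
  have hν0 : 0 ≤ ν h := by
    apply Int.floor_nonneg.mpr
    have : Real.logb 2 h ≤ 0 := Real.logb_nonpos (by norm_num) (le_of_lt hh0) (le_of_lt hh1)
    linarith
  obtain ⟨N, hNz⟩ : ∃ n : ℕ, (n : ℤ) = ν h := ⟨(ν h).toNat, Int.toNat_of_nonneg hν0⟩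
  have hNr : ((ν h : ℤ) : ℝ) = (N : ℝ) := by exact_mod_cast hNz.symm
  -- main estimate
  have hmain : |x (t + h) - x t| ≤
      (s2 ^ N - 1) * (s2 + 1) * h + (q ^ N * ((2 + s2)/3) + q ^ N * ((2 + s2)/3)) := by
    have hxd : x (t + h) - x t = ∑' m, (Ff θ m (t + h) - Ff θ m t) := by
      rw [hxe', hxe', (hFsum (t+h)).tsum_sub (hFsum t)]
    rw [hxd]
    have habs : |∑' m, (Ff θ m (t + h) - Ff θ m t)| ≤ ∑' m, |Ff θ m (t + h) - Ff θ m t| := by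
      have := norm_tsum_le_tsum_norm (f := fun m => Ff θ m (t+h) - Ff θ m t)
        (by simpa [Real.norm_eq_abs] using hD)
      simpa [Real.norm_eq_abs] using this
    refine le_trans habs ?_
    rw [← hD.sum_add_tsum_nat_add N]
    have hlow : ∑ m ∈ Finset.range N, |Ff θ m (t + h) - Ff θ m t| ≤ (s2 ^ N - 1) * (s2 + 1) * h := by
      calc ∑ m ∈ Finset.range N, |Ff θ m (t + h) - Ff θ m t|
          ≤ ∑ m ∈ Finset.range N, s2 ^ m * h :=
            Finset.sum_le_sum (fun m _ => level_lip hθ1 m (le_of_lt hh0))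
        _ = (∑ m ∈ Finset.range N, s2 ^ m) * h := by rw [Finset.sum_mul]
        _ = ((s2 ^ N - 1) / (s2 - 1)) * h := by rw [geom_sum_eq (ne_of_gt hs2one)]
        _ = (s2 ^ N - 1) * (s2 + 1) * h := by
            congr 1
            rw [div_eq_iff (by linarith : s2 - 1 ≠ 0)]
            linear_combination (1 - s2 ^ N) * hs2
    have htail : ∑' j, |Ff θ (j + N) (t + h) - Ff θ (j + N) t|
        ≤ q ^ N * ((2 + s2)/3) + q ^ N * ((2 + s2)/3) := by
      set y1 := (2:ℝ)^N * (t + h) with hy1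
      set y0 := (2:ℝ)^N * t with hy0
      set a : ℕ → ℝ := fun j => q ^ N * (q ^ j * e00 (Int.fract ((2:ℝ)^j * y1))) with ha
      set b : ℕ → ℝ := fun j => q ^ N * (q ^ j * e00 (Int.fract ((2:ℝ)^j * y0))) with hb
      have hab : ∀ j, |Ff θ (j + N) (t + h) - Ff θ (j + N) t| ≤ a j + b j := by
        intro j
        have e1 : (2:ℝ)^(j+N) * (t + h) = (2:ℝ)^j * y1 := by rw [hy1, pow_add]; ring
        have e0 : (2:ℝ)^(j+N) * t = (2:ℝ)^j * y0 := by rw [hy0, pow_add]; ring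
        calc |Ff θ (j + N) (t + h) - Ff θ (j + N) t|
            ≤ |Ff θ (j+N) (t+h)| + |Ff θ (j+N) t| := abs_sub _ _
          _ ≤ q^(j+N) * e00 (Int.fract ((2:ℝ)^(j+N) * (t+h)))
              + q^(j+N) * e00 (Int.fract ((2:ℝ)^(j+N) * t)) :=
              add_le_add (level_sup hθ1 _ _) (level_sup hθ1 _ _)
          _ = a j + b j := by rw [ha, hb]; simp only []; rw [e1, e0, pow_add]; ring
      have hcsum : ∀ y : ℝ, Summable (fun j : ℕ => q ^ j * e00 (Int.fract ((2:ℝ)^j * y))) := by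
        intro y
        apply Summable.of_norm_bounded hgeom
        intro j
        rw [Real.norm_eq_abs, abs_mul, abs_of_nonneg (pow_nonneg hq0 j),
          abs_of_nonneg (e00_nonneg _)]
        calc q ^ j * e00 (Int.fract ((2:ℝ)^j * y)) ≤ q ^ j * (1/2) :=
              mul_le_mul_of_nonneg_left (e00_le_half _) (pow_nonneg hq0 j)
          _ ≤ q ^ j := by nlinarith [pow_nonneg hq0 j]
      have hcle : ∀ y : ℝ, ∑' j, q ^ j * e00 (Int.fract ((2:ℝ)^j * y)) ≤ (2 + s2)/3 := by
        intro y
        apply (hcsum y).tsum_le_of_sum_range_le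
        intro n
        refine le_trans (takagi_bound n y) ?_
        have : (0:ℝ) ≤ max (1/3 - e00 (Int.fract y)) 0 := le_max_right _ _
        linarith
      have hasum : Summable a := ((hcsum y1).mul_left _)
      have hbsum : Summable b := ((hcsum y0).mul_left _)
      calc ∑' j, |Ff θ (j + N) (t + h) - Ff θ (j + N) t|
          ≤ ∑' j, (a j + b j) :=
            ((summable_nat_add_iff N).mpr hD).tsum_le_tsum hab (hasum.add hbsum)
        _ = (∑' j, a j) + (∑' j, b j) := hasum.tsum_add hbsum
        _ ≤ q ^ N * ((2 + s2)/3) + q ^ N * ((2 + s2)/3) := by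
            rw [ha, hb]
            rw [tsum_mul_left, tsum_mul_left]
            exact add_le_add
              (mul_le_mul_of_nonneg_left (hcle y1) (pow_nonneg hq0 N))
              (mul_le_mul_of_nonneg_left (hcle y0) (pow_nonneg hq0 N))
    exact add_le_add hlow htail
  -- convert to ω
  have hp1 : (2:ℝ) ^ ((ν h : ℝ)/2) = s2 ^ N := by rw [hNr, pow_half_eq]
  have hp2 : (2:ℝ) ^ (-(ν h : ℝ)/2) = q ^ N := by rw [hNr, pow_neg_half_eq]
  have homega : Real.sqrt 2 * ω h = (s2 + 1) * (s2 ^ N) * h + ((4 + 2*s2)/3) * q ^ N := by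
    unfold ω
    rw [hp1, hp2, ← hs2def, hqdef, ← hs2def]
    generalize s2 ^ N = A
    generalize (s2⁻¹) ^ N = B
    have hne : s2 ≠ 0 := ne_of_gt hs2pos
    field_simp
    linear_combination (2*B) * hs2
  rw [homega]
  nlinarith [hmain, pow_nonneg hq0 N, hh0, hs2one, pow_nonneg (le_of_lt hs2pos) N]

lemma omega_le {g : ℝ} (hg0 : 0 < g) (hg1 : g < 1) :
    ω g ≤ ((1 + 1/Real.sqrt 2) + (1/3)*(2*Real.sqrt 2 + 2)*Real.sqrt 2) * g ^ ((1:ℝ)/2) := by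
  set s2 := Real.sqrt 2 with hs2def
  have hs2pos : 0 < s2 := sqrt2_pos
  set L := Real.logb 2 g with hL
  have hfl : ((ν g : ℤ) : ℝ) ≤ -L := by
    have : ((⌊-L⌋ : ℤ) : ℝ) ≤ -L := Int.floor_le _
    exact this
  have hfl2 : -L < ((ν g : ℤ) : ℝ) + 1 := by
    have := Int.lt_floor_add_one (-L)
    exact_mod_cast this
  have h2L : (2:ℝ) ^ L = g := Real.rpow_logb (by norm_num) (by norm_num) hg0
  -- first term
  have t1 : (2:ℝ) ^ ((ν g : ℝ)/2) ≤ g ^ (-(1:ℝ)/2) := by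
    have step : (2:ℝ) ^ ((ν g : ℝ)/2) ≤ (2:ℝ) ^ (L * (-(1:ℝ)/2)) := by
      apply Real.rpow_le_rpow_of_exponent_le (by norm_num)
      nlinarith [hfl]
    calc (2:ℝ) ^ ((ν g : ℝ)/2) ≤ (2:ℝ) ^ (L * (-(1:ℝ)/2)) := step
      _ = g ^ (-(1:ℝ)/2) := by
          rw [Real.rpow_mul (by norm_num : (0:ℝ) ≤ 2), h2L]
  have t1' : g * (2:ℝ) ^ ((ν g : ℝ)/2) ≤ g ^ ((1:ℝ)/2) := by
    have := mul_le_mul_of_nonneg_left t1 (le_of_lt hg0)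
    calc g * (2:ℝ) ^ ((ν g : ℝ)/2) ≤ g * g ^ (-(1:ℝ)/2) := this
      _ = g ^ ((1:ℝ)/2) := by
          rw [show g * g ^ (-(1:ℝ)/2) = g ^ (1:ℝ) * g ^ (-(1:ℝ)/2) by rw [Real.rpow_one],
            ← Real.rpow_add hg0]
          norm_num
  -- second term
  have t2 : (2:ℝ) ^ (-(ν g : ℝ)/2) ≤ s2 * g ^ ((1:ℝ)/2) := by
    have step : (2:ℝ) ^ (-(ν g : ℝ)/2) ≤ (2:ℝ) ^ ((L+1)/2) := by
      apply Real.rpow_le_rpow_of_exponent_le (by norm_num)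
      nlinarith [hfl2]
    calc (2:ℝ) ^ (-(ν g : ℝ)/2) ≤ (2:ℝ) ^ ((L+1)/2) := step
      _ = s2 * g ^ ((1:ℝ)/2) := by
          rw [show ((L+1)/2 : ℝ) = L * (1/2) + 1/2 by ring,
            Real.rpow_add (by norm_num : (0:ℝ) < 2),
            Real.rpow_mul (by norm_num : (0:ℝ) ≤ 2), h2L]
          rw [hs2def, Real.sqrt_eq_rpow]
          ring
  unfold ω
  rw [← hs2def]
  have c1 : (0:ℝ) ≤ 1 + 1/s2 := by positivity
  have c2 : (0:ℝ) ≤ (1/3)*(2*s2+2) := by positivity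
  have m1 : (1 + 1/s2) * g * (2:ℝ) ^ ((ν g : ℝ)/2) ≤ (1 + 1/s2) * g ^ ((1:ℝ)/2) := by
    rw [mul_assoc]
    exact mul_le_mul_of_nonneg_left t1' c1
  have m2 : (1/3)*(2*s2+2) * (2:ℝ) ^ (-(ν g : ℝ)/2) ≤ (1/3)*(2*s2+2) * (s2 * g ^ ((1:ℝ)/2)) :=
    mul_le_mul_of_nonneg_left t2 c2
  nlinarith [m1, m2]

lemma stmt13_part2 : ∀ x ∈ mathcalX, ∃ C : ℝ, ∀ s ∈ Set.Icc (0 : ℝ) 1, ∀ t ∈ Set.Icc (0 : ℝ) 1,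
      |x t - x s| ≤ C * |t - s| ^ ((1 : ℝ) / 2) := by
  intro x hx
  set s2 := Real.sqrt 2 with hs2def
  have hs2pos : 0 < s2 := sqrt2_pos
  set C0 : ℝ := (1 + 1/Real.sqrt 2) + (1/3)*(2*Real.sqrt 2 + 2)*Real.sqrt 2 with hC0
  have hC00 : 0 ≤ C0 := by rw [hC0]; positivity
  refine ⟨2 * s2 * C0, ?_⟩
  have key : ∀ a ∈ Set.Icc (0:ℝ) 1, ∀ b ∈ Set.Icc (0:ℝ) 1, a < b →
      |x b - x a| ≤ 2 * s2 * C0 * |b - a| ^ ((1:ℝ)/2) := by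
    rintro a ⟨ha0, ha1⟩ b ⟨hb0, hb1⟩ hab
    set g := b - a with hg
    have hg0 : 0 < g := by rw [hg]; linarith
    have hg1 : g ≤ 1 := by rw [hg]; linarith
    have hgm : g/2 ∈ Set.Ioo (0:ℝ) 1 := ⟨by linarith, by linarith⟩
    have E1 := part1 x hx (g/2) hgm a ⟨ha0, by linarith⟩
    have E2 := part1 x hx (g/2) hgm (a + g/2) ⟨by linarith, by linarith⟩
    rw [show a + g/2 + g/2 = b by rw [hg]; ring] at E2
    have hωle : ω (g/2) ≤ C0 * (g/2) ^ ((1:ℝ)/2) := omega_le (by linarith) (by linarith)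
    have hrp : (g/2) ^ ((1:ℝ)/2) ≤ g ^ ((1:ℝ)/2) :=
      Real.rpow_le_rpow (by linarith) (by linarith) (by norm_num)
    have htri : |x b - x a| ≤ |x b - x (a + g/2)| + |x (a + g/2) - x a| := abs_sub_le _ _ _
    have habs : |b - a| = g := by rw [hg, abs_of_pos]; linarith
    rw [habs]
    have hrp0 : (0:ℝ) ≤ (g/2) ^ ((1:ℝ)/2) := Real.rpow_nonneg (by linarith) _
    calc |x b - x a| ≤ |x b - x (a + g/2)| + |x (a + g/2) - x a| := htri
      _ ≤ s2 * ω (g/2) + s2 * ω (g/2) := add_le_add E2 E1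
      _ ≤ s2 * (C0 * (g/2) ^ ((1:ℝ)/2)) + s2 * (C0 * (g/2) ^ ((1:ℝ)/2)) := by
          have := mul_le_mul_of_nonneg_left hωle (le_of_lt hs2pos)
          exact add_le_add this this
      _ ≤ 2 * s2 * C0 * g ^ ((1:ℝ)/2) := by
          have h1 : C0 * (g/2) ^ ((1:ℝ)/2) ≤ C0 * g ^ ((1:ℝ)/2) :=
            mul_le_mul_of_nonneg_left hrp hC00
          have h2 : s2 * (C0 * (g/2) ^ ((1:ℝ)/2)) ≤ s2 * (C0 * g ^ ((1:ℝ)/2)) :=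
            mul_le_mul_of_nonneg_left h1 (le_of_lt hs2pos)
          nlinarith [h2]
  rintro s hs t ht
  rcases lt_trichotomy s t with hst | hst | hst
  · exact key s hs t ht hst
  · rw [hst, sub_self, sub_self, abs_zero, Real.zero_rpow (by norm_num : (1:ℝ)/2 ≠ 0), mul_zero]
  · rw [abs_sub_comm (x t) (x s), abs_sub_comm t s]
    exact key t ht s hs hst

theorem stmt_13 :
    (∀ x ∈ mathcalX, ∀ h ∈ Set.Ioo (0 : ℝ) 1, ∀ t ∈ Set.Icc (0 : ℝ) (1 - h),
      |x (t + h) - x t| ≤ Real.sqrt 2 * ω h) ∧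
    (∀ x ∈ mathcalX, ∃ C : ℝ, ∀ s ∈ Set.Icc (0 : ℝ) 1, ∀ t ∈ Set.Icc (0 : ℝ) 1,
      |x t - x s| ≤ C * |t - s| ^ ((1 : ℝ) / 2)) :=
  ⟨part1, stmt13_part2⟩
end

section
/- For x = Σ_{m=0}^{∞} Σ_{k=0}^{2^m−1} θ_{m,k} e_{m,k} with bounded real coefficients θ_{m,k}, the quadratic variation along the n-th dyadic partition satisfies ⟨x⟩₁ⁿ := Σ_{j=0}^{2^n−1} (x((j+1)2^{−n}) − x(j·2^{−n}))² = 2^{−n} Σ_{m=0}^{n−1} Σ_{k=0}^{2^m−1} θ_{m,k}². -/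
lemma qv_e00_nonpos {t : ℝ} (h : t ≤ 0) : e00 t = 0 := by
  unfold e00
  rw [max_eq_right]
  exact le_trans (min_le_left _ _) h

lemma qv_e00_one_le {t : ℝ} (h : 1 ≤ t) : e00 t = 0 := by
  unfold e00
  rw [max_eq_right]
  exact le_trans (min_le_right _ _) (by linarith)

lemma qv_e00_left {t : ℝ} (h0 : 0 ≤ t) (h : t ≤ 1/2) : e00 t = t := by
  unfold e00
  rw [min_eq_left (by linarith), max_eq_left h0]

lemma qv_e00_right {t : ℝ} (h : 1/2 ≤ t) (h1 : t ≤ 1) : e00 t = 1 - t := by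
  unfold e00
  rw [min_eq_right (by linarith), max_eq_left (by linarith)]

lemma qv_e00_int (z : ℤ) : e00 (z : ℝ) = 0 := by
  rcases le_or_gt z 0 with h | h
  · exact qv_e00_nonpos (by exact_mod_cast h)
  · exact qv_e00_one_le (by exact_mod_cast h)

lemma qv_e00_half (a : ℤ) : e00 ((a : ℝ) + 1/2) = if a = 0 then 1/2 else 0 := by
  rcases lt_trichotomy a 0 with h | h | h
  · rw [if_neg h.ne]
    have : (a : ℝ) ≤ -1 := by exact_mod_cast (show a ≤ -1 by omega)
    exact qv_e00_nonpos (by linarith)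
  · subst h
    rw [if_pos rfl]
    rw [qv_e00_left (by norm_num) (by norm_num)]
    norm_num
  · rw [if_neg h.ne']
    have : (1 : ℝ) ≤ a := by exact_mod_cast h
    exact qv_e00_one_le (by linarith)

lemma qv_e_apply (m d : ℕ) (k j : ℤ) :
    e m k ((j : ℝ) * 2 ^ (-((m + d : ℕ) : ℤ))) =
      (2 : ℝ) ^ (-(m : ℝ)/2) * e00 (((j - k * 2^d : ℤ) : ℝ) / 2^d) := by
  unfold e
  have harg : (2:ℝ)^(m:ℕ) * ((j:ℝ) * 2^(-((m + d : ℕ) : ℤ))) - (k:ℝ)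
      = ((j - k * 2^d : ℤ) : ℝ) / 2^d := by
    rw [show ((2:ℝ) ^ (-((m + d : ℕ) : ℤ))) = ((2:ℝ)^m)⁻¹ * ((2:ℝ)^d)⁻¹ by
      rw [← mul_inv, ← pow_add, zpow_neg, zpow_natCast]]
    push_cast
    field_simp
  rw [harg]

lemma qv_e_zero (m : ℕ) (k : ℤ) (N : ℕ) (h : N ≤ m) (j : ℤ) :
    e m k ((j : ℝ) * 2 ^ (-(N : ℤ))) = 0 := by
  obtain ⟨d, rfl⟩ : ∃ d, m = N + d := ⟨m - N, by omega⟩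
  unfold e
  have hN : ((2:ℝ) ^ (N:ℕ)) ≠ 0 := by positivity
  have harg : (2:ℝ)^(N+d) * ((j:ℝ) * 2^(-(N:ℤ))) - (k:ℝ) = ((j * 2^d - k : ℤ) : ℝ) := by
    rw [pow_add, show (2:ℝ)^(-(N:ℤ)) = ((2:ℝ)^N)⁻¹ by rw [zpow_neg, zpow_natCast]]
    push_cast
    field_simp
  rw [harg, qv_e00_int, mul_zero]

lemma qv_e00_mid (d : ℕ) (hd : 1 ≤ d) (v : ℤ) :
    2 * e00 (((2*v+1 : ℤ) : ℝ)/2^(d+1)) =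
      e00 (((2*v : ℤ) : ℝ)/2^(d+1)) + e00 (((2*v+2 : ℤ) : ℝ)/2^(d+1)) := by
  have hQ : (0:ℝ) < 2^(d+1) := by positivity
  have hhalf : (1:ℝ)/2 * 2^(d+1) = 2^d := by ring
  have hZ : (2:ℤ)^d = 2 * 2^(d-1) := by
    conv_lhs => rw [show d = (d-1)+1 by omega]
    ring
  push_cast
  rcases lt_or_ge v 0 with hv | hv
  · have hvR : (v:ℝ) ≤ -1 := by exact_mod_cast (show v ≤ -1 by omega)
    rw [qv_e00_nonpos (div_nonpos_iff.mpr (Or.inr ⟨by linarith, hQ.le⟩)),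
        qv_e00_nonpos (div_nonpos_iff.mpr (Or.inr ⟨by linarith, hQ.le⟩)),
        qv_e00_nonpos (div_nonpos_iff.mpr (Or.inr ⟨by linarith, hQ.le⟩))]
    ring
  rcases lt_or_ge v (2^(d-1)) with h1 | h1
  · -- left linear piece
    have hub : 2*(v:ℝ)+2 ≤ 2^d := by
      exact_mod_cast (show 2*v+2 ≤ (2:ℤ)^d by rw [hZ]; linarith)
    have hvR : (0:ℝ) ≤ (v:ℝ) := by exact_mod_cast hv
    rw [qv_e00_left (by positivity) (by rw [div_le_iff₀ hQ]; linarith [hhalf]),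
        qv_e00_left (div_nonneg (by linarith) hQ.le) (by rw [div_le_iff₀ hQ]; linarith [hhalf]),
        qv_e00_left (div_nonneg (by linarith) hQ.le) (by rw [div_le_iff₀ hQ]; linarith [hhalf])]
    ring
  rcases lt_or_ge v (2^d) with h2 | h2
  · -- right linear piece
    have hlb : (2:ℝ)^d ≤ 2*(v:ℝ) := by
      exact_mod_cast (show (2:ℤ)^d ≤ 2*v by rw [hZ]; linarith)
    have hub : 2*(v:ℝ)+2 ≤ 2^(d+1) := by
      exact_mod_cast (show 2*v+2 ≤ (2:ℤ)^(d+1) by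
        have : (2:ℤ)^(d+1) = 2*2^d := by ring
        linarith)
    rw [qv_e00_right (by rw [le_div_iff₀ hQ]; linarith [hhalf]) (by rw [div_le_one hQ]; linarith),
        qv_e00_right (by rw [le_div_iff₀ hQ]; linarith [hhalf]) (by rw [div_le_one hQ]; linarith),
        qv_e00_right (by rw [le_div_iff₀ hQ]; linarith [hhalf]) (by rw [div_le_one hQ]; linarith)]
    ring
  · have hlb : (2:ℝ)^(d+1) ≤ 2*(v:ℝ) := by
      exact_mod_cast (show (2:ℤ)^(d+1) ≤ 2*v by
        have : (2:ℤ)^(d+1) = 2*2^d := by ring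
        linarith)
    rw [qv_e00_one_le (by rw [le_div_iff₀ hQ]; linarith),
        qv_e00_one_le (by rw [le_div_iff₀ hQ]; linarith),
        qv_e00_one_le (by rw [le_div_iff₀ hQ]; linarith)]
    ring

lemma qv_e_second_diff (n m : ℕ) (hmn : m ≤ n) (k j : ℤ) :
    2 * e m k (((2*j+1 : ℤ) : ℝ) * 2 ^ (-((n+1 : ℕ) : ℤ)))
      - e m k (((2*j : ℤ) : ℝ) * 2 ^ (-((n+1 : ℕ) : ℤ)))
      - e m k (((2*j+2 : ℤ) : ℝ) * 2 ^ (-((n+1 : ℕ) : ℤ)))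
    = if m = n ∧ k = j then (2:ℝ) ^ (-(n:ℝ)/2) else 0 := by
  by_cases hm : m = n
  · subst hm
    rw [qv_e_apply m 1, qv_e_apply m 1, qv_e_apply m 1]
    have h0 : ((2*j - k*2^1 : ℤ) : ℝ)/2^1 = ((j - k : ℤ) : ℝ) := by push_cast; ring
    have h2 : ((2*j+2 - k*2^1 : ℤ) : ℝ)/2^1 = ((j - k + 1 : ℤ) : ℝ) := by push_cast; ring
    have h1 : ((2*j+1 - k*2^1 : ℤ) : ℝ)/2^1 = ((j - k : ℤ) : ℝ) + 1/2 := by push_cast; ring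
    rw [h0, h1, h2, qv_e00_int, qv_e00_int, qv_e00_half]
    by_cases hkj : k = j
    · rw [if_pos (by omega : j - k = 0), if_pos ⟨rfl, hkj⟩]
      ring
    · rw [if_neg (by omega : ¬ j - k = 0), if_neg (by tauto)]
      ring
  · have hlt : m < n := lt_of_le_of_ne hmn hm
    rw [show n + 1 = m + (n - m + 1) by omega]
    rw [qv_e_apply m (n-m+1), qv_e_apply m (n-m+1), qv_e_apply m (n-m+1)]
    have hv1 : (2*j+1 - k*2^(n-m+1) : ℤ) = 2*(j - k*2^(n-m)) + 1 := by ring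
    have hv0 : (2*j - k*2^(n-m+1) : ℤ) = 2*(j - k*2^(n-m)) := by ring
    have hv2 : (2*j+2 - k*2^(n-m+1) : ℤ) = 2*(j - k*2^(n-m)) + 2 := by ring
    rw [hv0, hv1, hv2, if_neg (by tauto)]
    have hmid := qv_e00_mid (n-m) (by omega) (j - k*2^(n-m))
    linear_combination ((2:ℝ)^(-(m:ℝ)/2)) * hmid

lemma qv_x_dyadic (θ : ℕ → ℕ → ℝ) (x : ℝ → ℝ)
    (hx : ∀ t, x t = ∑' m : ℕ, ∑ k ∈ Finset.range (2 ^ m), θ m k * e m k t)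
    (N : ℕ) (j : ℤ) :
    x ((j : ℝ) * 2 ^ (-(N : ℤ)))
      = ∑ m ∈ Finset.range N, ∑ k ∈ Finset.range (2^m),
          θ m k * e m k ((j : ℝ) * 2 ^ (-(N : ℤ))) := by
  rw [hx]
  exact tsum_eq_sum (fun m hm => Finset.sum_eq_zero fun k _ => by
    rw [qv_e_zero m k N (by simpa [Finset.mem_range, not_lt] using hm) j, mul_zero])

lemma qv_x_second_diff (θ : ℕ → ℕ → ℝ) (x : ℝ → ℝ)
    (hx : ∀ t, x t = ∑' m : ℕ, ∑ k ∈ Finset.range (2 ^ m), θ m k * e m k t)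
    (n j : ℕ) (hj : j < 2^n) :
    2 * x (((2*j+1 : ℕ) : ℝ) * 2 ^ (-((n+1 : ℕ) : ℤ)))
      - x ((j : ℝ) * 2 ^ (-(n : ℤ)))
      - x (((j : ℝ) + 1) * 2 ^ (-(n : ℤ)))
    = θ n j * (2:ℝ) ^ (-(n:ℝ)/2) := by
  have h2 : (2:ℝ) ^ (-((n:ℤ)+1)) * 2 = 2 ^ (-(n:ℤ)) := by
    rw [show -((n:ℤ)+1) = -(n:ℤ) + (-1) by ring, zpow_add₀ two_ne_zero, zpow_neg_one]
    ring
  have q1 : ((2*j+1 : ℕ) : ℝ) * 2 ^ (-((n+1 : ℕ) : ℤ))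
      = ((2*(j:ℤ)+1 : ℤ) : ℝ) * 2 ^ (-((n+1 : ℕ) : ℤ)) := by push_cast; ring
  have q0 : (j : ℝ) * 2 ^ (-(n : ℤ))
      = ((2*(j:ℤ) : ℤ) : ℝ) * 2 ^ (-((n+1 : ℕ) : ℤ)) := by
    push_cast
    rw [← h2]
    ring
  have q2 : ((j : ℝ) + 1) * 2 ^ (-(n : ℤ))
      = ((2*(j:ℤ)+2 : ℤ) : ℝ) * 2 ^ (-((n+1 : ℕ) : ℤ)) := by
    push_cast
    rw [← h2]
    ring
  rw [q1, q0, q2, qv_x_dyadic θ x hx (n+1), qv_x_dyadic θ x hx (n+1),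
    qv_x_dyadic θ x hx (n+1)]
  rw [Finset.mul_sum, ← Finset.sum_sub_distrib, ← Finset.sum_sub_distrib]
  have hstep : ∀ m ∈ Finset.range (n+1),
      (2 * (∑ k ∈ Finset.range (2^m),
          θ m k * e m k (((2*(j:ℤ)+1 : ℤ) : ℝ) * 2 ^ (-((n+1 : ℕ) : ℤ))))
        - ∑ k ∈ Finset.range (2^m),
            θ m k * e m k (((2*(j:ℤ) : ℤ) : ℝ) * 2 ^ (-((n+1 : ℕ) : ℤ)))
        - ∑ k ∈ Finset.range (2^m),
            θ m k * e m k (((2*(j:ℤ)+2 : ℤ) : ℝ) * 2 ^ (-((n+1 : ℕ) : ℤ))))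
      = if m = n then θ n j * (2:ℝ) ^ (-(n:ℝ)/2) else 0 := by
    intro m hm
    have hmn : m ≤ n := Nat.lt_succ_iff.mp (Finset.mem_range.mp hm)
    rw [Finset.mul_sum, ← Finset.sum_sub_distrib, ← Finset.sum_sub_distrib]
    have hterm : ∀ k ∈ Finset.range (2^m),
        (2 * (θ m k * e m k (((2*(j:ℤ)+1 : ℤ) : ℝ) * 2 ^ (-((n+1 : ℕ) : ℤ))))
          - θ m k * e m k (((2*(j:ℤ) : ℤ) : ℝ) * 2 ^ (-((n+1 : ℕ) : ℤ)))
          - θ m k * e m k (((2*(j:ℤ)+2 : ℤ) : ℝ) * 2 ^ (-((n+1 : ℕ) : ℤ))))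
        = if m = n ∧ (k:ℤ) = (j:ℤ) then θ m k * (2:ℝ) ^ (-(n:ℝ)/2) else 0 := by
      intro k _
      have hsd := qv_e_second_diff n m hmn (k:ℤ) (j:ℤ)
      rw [show 2 * (θ m k * e m k (((2*(j:ℤ)+1 : ℤ) : ℝ) * 2 ^ (-((n+1 : ℕ) : ℤ))))
          - θ m k * e m k (((2*(j:ℤ) : ℤ) : ℝ) * 2 ^ (-((n+1 : ℕ) : ℤ)))
          - θ m k * e m k (((2*(j:ℤ)+2 : ℤ) : ℝ) * 2 ^ (-((n+1 : ℕ) : ℤ)))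
          = θ m k * (2 * e m k (((2*(j:ℤ)+1 : ℤ) : ℝ) * 2 ^ (-((n+1 : ℕ) : ℤ)))
            - e m k (((2*(j:ℤ) : ℤ) : ℝ) * 2 ^ (-((n+1 : ℕ) : ℤ)))
            - e m k (((2*(j:ℤ)+2 : ℤ) : ℝ) * 2 ^ (-((n+1 : ℕ) : ℤ)))) from by ring,
        hsd]
      by_cases h : m = n ∧ (k:ℤ) = (j:ℤ)
      · rw [if_pos h, if_pos h]
      · rw [if_neg h, if_neg h, mul_zero]
    rw [Finset.sum_congr rfl hterm]
    by_cases h : m = n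
    · subst h
      simp only [eq_self_iff_true, true_and, Int.natCast_inj, mul_ite, mul_zero]
      rw [Finset.sum_ite_eq' (Finset.range (2^m)), if_pos (Finset.mem_range.mpr hj)]
      simp
    · simp [h]
  rw [Finset.sum_congr rfl hstep, Finset.sum_ite_eq' (Finset.range (n+1)),
    if_pos (Finset.self_mem_range_succ n)]

lemma qv_sum_range_two_mul {M : Type*} [AddCommMonoid M] (f : ℕ → M) (n : ℕ) :
    ∑ j ∈ Finset.range (2*n), f j = ∑ j ∈ Finset.range n, (f (2*j) + f (2*j+1)) := by
  induction n with
  | zero => simp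
  | succ n ih =>
    rw [Finset.sum_range_succ, ← ih, show 2*(n+1) = 2*n+1+1 by ring,
      Finset.sum_range_succ, Finset.sum_range_succ, add_assoc]

theorem stmt_16 (θ : ℕ → ℕ → ℝ) (hθ : ∃ C : ℝ, ∀ m k, |θ m k| ≤ C)
    (x : ℝ → ℝ)
    (hx : ∀ t, x t = ∑' m : ℕ, ∑ k ∈ Finset.range (2 ^ m), θ m k * e m k t)
    (n : ℕ) :
    ∑ j ∈ Finset.range (2 ^ n),
        (x ((j + 1 : ℝ) * 2 ^ (-(n : ℤ))) - x ((j : ℝ) * 2 ^ (-(n : ℤ)))) ^ 2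
      = (2 : ℝ) ^ (-(n : ℤ)) *
          ∑ m ∈ Finset.range n, ∑ k ∈ Finset.range (2 ^ m), θ m k ^ 2 := by
  induction n with
  | zero =>
    have h0 : x 0 = 0 := by simpa using qv_x_dyadic θ x hx 0 0
    have h1 : x 1 = 0 := by simpa using qv_x_dyadic θ x hx 0 1
    norm_num [h0, h1]
  | succ n ih =>
    have hsq : ((2:ℝ) ^ (-(n:ℝ)/2))^2 = (2:ℝ) ^ (-(n:ℤ)) := by
      rw [sq, ← Real.rpow_add (by norm_num : (0:ℝ) < 2),
        show -(n:ℝ)/2 + -(n:ℝ)/2 = ((-(n:ℤ) : ℤ) : ℝ) by push_cast; ring,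
        Real.rpow_intCast]
    have h2 : (2:ℝ) ^ (-((n:ℤ)+1)) * 2 = 2 ^ (-(n:ℤ)) := by
      rw [show -((n:ℤ)+1) = -(n:ℤ) + (-1) by ring, zpow_add₀ two_ne_zero, zpow_neg_one]
      ring
    have hexp : (2:ℝ) ^ (-((n+1:ℕ):ℤ)) = 2 ^ (-(n:ℤ)) / 2 := by
      push_cast
      rw [← h2]
      ring
    have key : ∀ j ∈ Finset.range (2^n),
        ((x ((((2*j : ℕ) : ℝ) + 1) * 2 ^ (-((n+1:ℕ) : ℤ)))
            - x (((2*j : ℕ) : ℝ) * 2 ^ (-((n+1:ℕ) : ℤ)))) ^ 2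
          + (x ((((2*j+1 : ℕ) : ℝ) + 1) * 2 ^ (-((n+1:ℕ) : ℤ)))
            - x (((2*j+1 : ℕ) : ℝ) * 2 ^ (-((n+1:ℕ) : ℤ)))) ^ 2)
        = ((x (((j:ℝ) + 1) * 2 ^ (-(n : ℤ))) - x ((j:ℝ) * 2 ^ (-(n : ℤ)))) ^ 2) / 2
          + θ n j ^ 2 * 2 ^ (-(n:ℤ)) / 2 := by
      intro j hj
      have hjn : j < 2^n := Finset.mem_range.mp hj
      have hD := qv_x_second_diff θ x hx n j hjn
      have hp0 : ((2*j : ℕ) : ℝ) * 2 ^ (-((n+1:ℕ) : ℤ)) = (j:ℝ) * 2 ^ (-(n:ℤ)) := by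
        push_cast
        rw [← h2]
        ring
      have hp2 : (((2*j+1 : ℕ) : ℝ) + 1) * 2 ^ (-((n+1:ℕ) : ℤ))
          = ((j:ℝ) + 1) * 2 ^ (-(n:ℤ)) := by
        push_cast
        rw [← h2]
        ring
      have hpm : (((2*j : ℕ) : ℝ) + 1) * 2 ^ (-((n+1:ℕ) : ℤ))
          = ((2*j+1 : ℕ) : ℝ) * 2 ^ (-((n+1:ℕ) : ℤ)) := by push_cast; ring
      rw [hp0, hp2, hpm]
      set a := x ((j:ℝ) * 2 ^ (-(n:ℤ)))
      set b := x (((j:ℝ) + 1) * 2 ^ (-(n:ℤ)))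
      set c := x (((2*j+1 : ℕ) : ℝ) * 2 ^ (-((n+1:ℕ) : ℤ)))
      have hid : (c - a)^2 + (b - c)^2 = (b - a)^2/2 + (2*c - a - b)^2/2 := by ring
      rw [hid, hD, mul_pow, hsq]
    calc ∑ j ∈ Finset.range (2 ^ (n+1)),
          (x ((↑j + 1) * 2 ^ (-((n+1:ℕ) : ℤ))) - x (↑j * 2 ^ (-((n+1:ℕ) : ℤ)))) ^ 2
        = ∑ j ∈ Finset.range (2^n),
            ((x ((((2*j:ℕ):ℝ) + 1) * 2 ^ (-((n+1:ℕ) : ℤ)))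
              - x (((2*j:ℕ):ℝ) * 2 ^ (-((n+1:ℕ) : ℤ)))) ^ 2
            + (x ((((2*j+1:ℕ):ℝ) + 1) * 2 ^ (-((n+1:ℕ) : ℤ)))
              - x (((2*j+1:ℕ):ℝ) * 2 ^ (-((n+1:ℕ) : ℤ)))) ^ 2) := by
          rw [show 2^(n+1) = 2*2^n from by ring]
          exact qv_sum_range_two_mul _ _
      _ = ∑ j ∈ Finset.range (2^n),
            (((x (((j:ℝ) + 1) * 2 ^ (-(n : ℤ))) - x ((j:ℝ) * 2 ^ (-(n : ℤ)))) ^ 2) / 2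
            + θ n j ^ 2 * 2 ^ (-(n:ℤ)) / 2) := Finset.sum_congr rfl key
      _ = (∑ j ∈ Finset.range (2^n),
            (x (((j:ℝ) + 1) * 2 ^ (-(n : ℤ))) - x ((j:ℝ) * 2 ^ (-(n : ℤ)))) ^ 2) / 2
          + (∑ j ∈ Finset.range (2^n), θ n j ^ 2) * 2 ^ (-(n:ℤ)) / 2 := by
          rw [Finset.sum_add_distrib, ← Finset.sum_div, ← Finset.sum_div, ← Finset.sum_mul]
      _ = (2 : ℝ) ^ (-((n+1:ℕ) : ℤ)) *
            ∑ m ∈ Finset.range (n+1), ∑ k ∈ Finset.range (2 ^ m), θ m k ^ 2 := by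
          rw [ih, Finset.sum_range_succ, hexp]
          ring
end

section
/- Every x ∈ 𝒳 admits the pathwise quadratic variation ⟨x⟩_t = t along the dyadic partitions: for every t ∈ [0,1], Σ_{s∈𝕋_n, s≤t} (x(s') − x(s))² → t as n → ∞, where s' denotes the successor of s in 𝕋_n. -/
/-- Discrete quadratic variation of `x` up to time `t` along the `n`-th dyadic
partition.  (The point `s = 1` of the partition has successor `1` and hence
contributes `0`, so it is omitted.) -/
noncomputable def qv (x : ℝ → ℝ) (n : ℕ) (t : ℝ) : ℝ :=
  ∑ j ∈ Finset.range (2 ^ n),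
    if (j : ℝ) * 2 ^ (-(n : ℤ)) ≤ t then
      (x ((j + 1 : ℝ) * 2 ^ (-(n : ℤ))) - x ((j : ℝ) * 2 ^ (-(n : ℤ)))) ^ 2
    else 0

namespace QV17

/-! ### Elementary properties of the tent function -/

lemma e00_of_nonpos {t : ℝ} (h : t ≤ 0) : e00 t = 0 := by
  unfold e00
  rw [max_eq_right]
  exact le_trans (min_le_left _ _) h

lemma e00_of_one_le {t : ℝ} (h : 1 ≤ t) : e00 t = 0 := by
  unfold e00
  rw [max_eq_right]
  exact le_trans (min_le_right _ _) (by linarith)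

lemma e00_left {t : ℝ} (h0 : 0 ≤ t) (h : 2*t ≤ 1) : e00 t = t := by
  unfold e00
  rw [min_eq_left (by linarith), max_eq_left h0]

lemma e00_right {t : ℝ} (h : 1 ≤ 2*t) (h1 : t ≤ 1) : e00 t = 1 - t := by
  unfold e00
  rw [min_eq_right (by linarith), max_eq_left (by linarith)]

lemma e00_intCast (z : ℤ) : e00 (z : ℝ) = 0 := by
  rcases le_or_gt z 0 with h | h
  · exact e00_of_nonpos (by exact_mod_cast h)
  · exact e00_of_one_le (by exact_mod_cast h)

/-- tent difference on the `n`-th level subintervals -/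
lemma e00_diff {H r : ℕ} (hH : 0 < H) (hr : r < 2*H) :
    e00 (((r:ℝ)+1)/(2*H)) - e00 ((r:ℝ)/(2*H)) =
      (if r < H then 1 else -1) * ((2*H:ℝ))⁻¹ := by
  have hHR : (0:ℝ) < 2*(H:ℝ) := by positivity
  have hrR : (r:ℝ) + 1 ≤ 2*H := by exact_mod_cast hr
  by_cases hrH : r < H
  · have h1 : (r:ℝ) + 1 ≤ H := by exact_mod_cast Nat.succ_le_of_lt hrH
    rw [if_pos hrH, e00_left (by positivity) (by rw [mul_div_assoc', div_le_one hHR]; linarith),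
      e00_left (by positivity) (by rw [mul_div_assoc', div_le_one hHR]; linarith)]
    field_simp
    ring
  · have h1 : (H:ℝ) ≤ r := by exact_mod_cast Nat.le_of_not_lt hrH
    rw [if_neg hrH, e00_right (by rw [mul_div_assoc', le_div_iff₀ hHR]; linarith)
        (by rw [div_le_one hHR]; linarith),
      e00_right (by rw [mul_div_assoc', le_div_iff₀ hHR]; linarith)
        (by rw [div_le_one hHR]; linarith)]
    field_simp
    ring

/-! ### Signs and coefficients -/

noncomputable def sgn (n m j : ℕ) : ℝ := if j / 2^(n-m-1) % 2 = 0 then 1 else -1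

noncomputable def eps (θ : ℕ → ℕ → ℝ) (n m j : ℕ) : ℝ := θ m (j / 2^(n-m)) * sgn n m j

noncomputable def c (n m : ℕ) : ℝ := (2:ℝ) ^ ((m:ℝ)/2 - n)

lemma two_zpow_mul {m n : ℕ} (h : m ≤ n) :
    (2:ℝ)^m * (2:ℝ)^(-(n:ℤ)) = (((2^(n-m) : ℕ)) : ℝ)⁻¹ := by
  have h1 : (((2^(n-m):ℕ)):ℝ) = (2:ℝ)^(((n-m:ℕ)):ℤ) := by
    push_cast; norm_num
  rw [h1, ← zpow_natCast (2:ℝ) m, ← zpow_add₀ (two_ne_zero), ← zpow_neg]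
  congr 1
  omega

lemma c_eq {m n : ℕ} (h : m ≤ n) :
    (2:ℝ)^(-(m:ℝ)/2) * (((2^(n-m):ℕ)):ℝ)⁻¹ = c n m := by
  have h1 : ((2^(n-m):ℕ):ℝ) = (2:ℝ) ^ ((((n-m):ℕ)):ℝ) := by
    rw [Real.rpow_natCast]; push_cast; ring
  rw [h1, ← Real.rpow_neg (by norm_num), ← Real.rpow_add (by norm_num)]
  unfold c
  congr 1
  rw [Nat.cast_sub h]; ring

lemma c_pos (n m : ℕ) : 0 < c n m := Real.rpow_pos_of_pos two_pos _

lemma eps_mul_self (θ : ℕ → ℕ → ℝ) (hθ : ∀ m k, θ m k = 1 ∨ θ m k = -1) (n m j : ℕ) :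
    eps θ n m j * eps θ n m j = 1 := by
  unfold eps sgn
  rcases hθ m (j / 2^(n-m)) with h|h <;> rw [h] <;> split_ifs <;> norm_num

/-! ### The increment formula -/

lemma sum_incr (θ : ℕ → ℕ → ℝ) {n m j : ℕ} (hm : m < n) (hj : j < 2^n) :
    ∑ k ∈ Finset.range (2^m), θ m k *
      (e m (k : ℤ) (((j:ℝ)+1) * 2^(-(n:ℤ))) - e m (k : ℤ) ((j:ℝ) * 2^(-(n:ℤ))))
    = eps θ n m j * c n m := by
  set D := 2^(n-m) with hDdef
  set H := 2^(n-m-1) with hHdef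
  have hD2H : D = 2*H := by rw [hDdef, hHdef, ← pow_succ']; congr 1; omega
  have hH : 0 < H := Nat.pow_pos (by norm_num)
  have hDpos : 0 < D := by omega
  set q := j / D with hqdef
  set r := j % D with hrdef
  have hqr : j = D * q + r := (Nat.div_add_mod j D).symm
  have hr : r < D := Nat.mod_lt _ hDpos
  have hq : q < 2 ^ m := by
    rw [hqdef, Nat.div_lt_iff_lt_mul hDpos]
    calc j < 2^n := hj
    _ = 2^m * D := by rw [hDdef, ← pow_add]; congr 1; omega
  have hDR : ((D:ℕ):ℝ) = 2*(H:ℝ) := by exact_mod_cast congrArg (Nat.cast (R := ℝ)) hD2H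
  have hDRpos : (0:ℝ) < (D:ℝ) := by exact_mod_cast hDpos
  have hjR : (j:ℝ) = D * q + r := by exact_mod_cast congrArg (Nat.cast (R := ℝ)) hqr
  have hrR : (r:ℝ) + 1 ≤ D := by exact_mod_cast hr
  have harg : ∀ y : ℝ, (2:ℝ)^m * (y * 2 ^ (-(n:ℤ))) = y / (D:ℝ) := by
    intro y
    rw [← mul_assoc, mul_comm ((2:ℝ)^m) y, mul_assoc, two_zpow_mul hm.le, div_eq_mul_inv]
  have hsgn : sgn n m j = if r < H then 1 else -1 := by
    have hjH : j / H = 2*q + r/H := by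
      rw [hqr, hD2H, show 2*H*q + r = H*(2*q)+r by ring, Nat.mul_add_div hH]
    have hmod : j / H % 2 = (r/H) % 2 := by rw [hjH, Nat.mul_add_mod]
    unfold sgn
    rw [← hHdef, hmod]
    by_cases hrH : r < H
    · rw [Nat.div_eq_of_lt hrH, if_pos (by norm_num), if_pos hrH]
    · have : r / H = 1 := Nat.div_eq_of_lt_le (by omega) (by omega)
      rw [this, if_neg (by norm_num), if_neg hrH]
  rw [Finset.sum_eq_single_of_mem q (Finset.mem_range.mpr hq)]
  · unfold e
    rw [harg, harg, hjR]
    have hA : ((D:ℝ) * q + r) / D - (q:ℤ) = (r:ℝ) / (2*H) := by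
      push_cast
      rw [← hDR]
      field_simp
      ring
    have hA' : ((D:ℝ) * q + r + 1) / D - (q:ℤ) = ((r:ℝ)+1) / (2*H) := by
      push_cast
      rw [← hDR]
      field_simp
      ring
    rw [hA, hA', ← mul_sub, e00_diff hH (by omega)]
    unfold eps
    rw [← hqdef, hsgn]
    have : (2:ℝ)^(-(m:ℝ)/2) * ((2*(H:ℝ))⁻¹) = c n m := by
      rw [← hDR]; exact c_eq hm.le
    rw [← this]
    split_ifs <;> ring
  · intro k hk hkq
    unfold e
    rw [harg, harg, hjR]
    rcases lt_or_gt_of_ne hkq with h | h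
    · have h1 : (k:ℝ) + 1 ≤ q := by exact_mod_cast h
      have hge : ∀ z : ℝ, 0 ≤ z → (1:ℝ) ≤ ((D:ℝ)*q + r + z)/D - (k:ℤ) := by
        intro z hz
        push_cast
        rw [le_sub_iff_add_le, le_div_iff₀ hDRpos]
        have h0r : (0:ℝ) ≤ r := by positivity
        nlinarith
      rw [e00_of_one_le (hge 1 (by norm_num)), e00_of_one_le (by
        have := hge 0 le_rfl; simpa using this)]
      ring
    · have h1 : (q:ℝ) + 1 ≤ k := by exact_mod_cast h
      have hle : ∀ z : ℝ, z ≤ 1 → ((D:ℝ)*q + r + z)/D - (k:ℤ) ≤ 0 := by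
        intro z hz
        push_cast
        rw [sub_nonpos, div_le_iff₀ hDRpos]
        nlinarith
      rw [e00_of_nonpos (hle 1 le_rfl), e00_of_nonpos (by
        have := hle 0 (by norm_num); simpa using this)]
      ring

/-! ### Values of `x` at dyadic points -/

lemma e_dyadic_zero {m n j : ℕ} (h : n ≤ m) (k : ℤ) :
    e m k ((j:ℝ) * 2 ^ (-(n:ℤ))) = 0 := by
  unfold e
  have h1 : (2:ℝ)^m * ((j:ℝ) * 2 ^ (-(n:ℤ))) = ((j * 2^(m-n) : ℕ) : ℝ) := by
    rw [← mul_assoc, mul_comm ((2:ℝ)^m) (j:ℝ), mul_assoc,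
      ← zpow_natCast (2:ℝ) m, ← zpow_add₀ (two_ne_zero),
      show (m:ℤ) + -(n:ℤ) = ((m - n : ℕ) : ℤ) by omega, zpow_natCast]
    push_cast
    ring
  rw [h1, show ((j*2^(m-n):ℕ):ℝ) - (k:ℝ) = (((j*2^(m-n):ℕ):ℤ) - k : ℤ) by push_cast; ring,
    e00_intCast]
  ring

lemma x_sum (θ : ℕ → ℕ → ℝ) (x : ℝ → ℝ)
    (hrepr : ∀ t, x t = ∑' m : ℕ, ∑ k ∈ Finset.range (2 ^ m), θ m k * e m k t)
    (n j : ℕ) :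
    x ((j:ℝ) * 2 ^ (-(n:ℤ))) = ∑ m ∈ Finset.range n,
      ∑ k ∈ Finset.range (2 ^ m), θ m k * e m k ((j:ℝ) * 2 ^ (-(n:ℤ))) := by
  rw [hrepr]
  apply tsum_eq_sum
  intro m hm
  apply Finset.sum_eq_zero
  intro k _
  rw [e_dyadic_zero (Nat.le_of_not_lt (fun h => hm (Finset.mem_range.mpr h)))]
  ring

lemma incr_eq (θ : ℕ → ℕ → ℝ) (x : ℝ → ℝ)
    (hrepr : ∀ t, x t = ∑' m : ℕ, ∑ k ∈ Finset.range (2 ^ m), θ m k * e m k t)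
    {n j : ℕ} (hj : j < 2^n) :
    x (((j:ℝ)+1) * 2 ^ (-(n:ℤ))) - x ((j:ℝ) * 2 ^ (-(n:ℤ)))
      = ∑ m ∈ Finset.range n, eps θ n m j * c n m := by
  have h1 : ((j:ℝ)+1) = ((j+1 : ℕ):ℝ) := by push_cast; ring
  rw [h1, x_sum θ x hrepr n (j+1), x_sum θ x hrepr n j, ← Finset.sum_sub_distrib]
  apply Finset.sum_congr rfl
  intro m hm
  rw [← Finset.sum_sub_distrib, ← sum_incr θ (Finset.mem_range.mp hm) hj]
  apply Finset.sum_congr rfl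
  intro k _
  rw [← h1, mul_sub]

/-! ### Cross-term cancellation -/

lemma block_sum (cf : ℕ → ℝ) {H : ℕ} (hH : 0 < H) (a : ℕ) :
    ∑ j ∈ Finset.range (a*(2*H)), cf (j/(2*H)) * (if j/H % 2 = 0 then (1:ℝ) else -1) = 0 := by
  induction a with
  | zero => simp
  | succ a ih =>
    rw [show (a+1)*(2*H) = a*(2*H) + 2*H by ring, Finset.range_eq_Ico,
      ← Finset.sum_Ico_consecutive _ (Nat.zero_le _) (Nat.le_add_right _ _),
      ← Finset.range_eq_Ico, ih, zero_add,
      show a*(2*H) + 2*H = (a*(2*H) + H) + H by ring,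
      ← Finset.sum_Ico_consecutive _ (Nat.le_add_right _ _) (Nat.le_add_right _ _)]
    have h1 : ∀ j ∈ Finset.Ico (a*(2*H)) (a*(2*H)+H),
        cf (j/(2*H)) * (if j/H % 2 = 0 then (1:ℝ) else -1) = cf a := by
      intro j hj
      rw [Finset.mem_Ico] at hj
      have hd1 : j / (2*H) = a := Nat.div_eq_of_lt_le (by nlinarith [hj.1, hj.2]) (by nlinarith [hj.1, hj.2])
      have hd2 : j / H = 2*a := Nat.div_eq_of_lt_le (by nlinarith [hj.1, hj.2]) (by nlinarith [hj.1, hj.2])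
      rw [hd1, hd2, if_pos (by omega)]
      ring
    have h2 : ∀ j ∈ Finset.Ico (a*(2*H)+H) (a*(2*H)+H+H),
        cf (j/(2*H)) * (if j/H % 2 = 0 then (1:ℝ) else -1) = -cf a := by
      intro j hj
      rw [Finset.mem_Ico] at hj
      have hd1 : j / (2*H) = a := Nat.div_eq_of_lt_le (by nlinarith [hj.1, hj.2]) (by nlinarith [hj.1, hj.2])
      have hd2 : j / H = 2*a+1 := Nat.div_eq_of_lt_le (by nlinarith [hj.1, hj.2]) (by nlinarith [hj.1, hj.2])
      rw [hd1, hd2, if_neg (by omega)]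
      ring
    rw [Finset.sum_congr rfl h1, Finset.sum_congr rfl h2, Finset.sum_const,
      Finset.sum_const, Nat.card_Ico, Nat.card_Ico]
    simp only [show a*(2*H)+H - a*(2*H) = H by omega,
      show a*(2*H)+H+H - (a*(2*H)+H) = H by omega]
    simp

lemma partial_bound (cf : ℕ → ℝ) (hcf : ∀ a, |cf a| ≤ 1) {H : ℕ} (J : ℕ) (hH : 0 < H) :
    |∑ j ∈ Finset.range J, cf (j/(2*H)) * (if j/H % 2 = 0 then (1:ℝ) else -1)| ≤ 2*H := by
  have hB : 0 < 2*H := by omega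
  have hsplit : ∑ j ∈ Finset.range J, cf (j/(2*H)) * (if j/H % 2 = 0 then (1:ℝ) else -1)
      = ∑ j ∈ Finset.range ((J/(2*H))*(2*H)), cf (j/(2*H)) * (if j/H % 2 = 0 then (1:ℝ) else -1)
      + ∑ j ∈ Finset.Ico ((J/(2*H))*(2*H)) J, cf (j/(2*H)) * (if j/H % 2 = 0 then (1:ℝ) else -1) := by
    simp only [Finset.range_eq_Ico]
    exact (Finset.sum_Ico_consecutive _ (Nat.zero_le _) (Nat.div_mul_le_self J (2*H))).symm
  rw [hsplit, block_sum cf hH, zero_add]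
  calc |∑ j ∈ Finset.Ico ((J/(2*H))*(2*H)) J, cf (j/(2*H)) * (if j/H % 2 = 0 then (1:ℝ) else -1)|
      ≤ ∑ j ∈ Finset.Ico ((J/(2*H))*(2*H)) J, |cf (j/(2*H)) * (if j/H % 2 = 0 then (1:ℝ) else -1)| :=
        Finset.abs_sum_le_sum_abs _ _
    _ ≤ ∑ j ∈ Finset.Ico ((J/(2*H))*(2*H)) J, 1 := by
        apply Finset.sum_le_sum
        intro j _
        rw [abs_mul]
        have h2 : |if j/H % 2 = 0 then (1:ℝ) else -1| ≤ 1 := by split_ifs <;> norm_num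
        calc |cf (j/(2*H))| * |if j/H % 2 = 0 then (1:ℝ) else -1| ≤ 1 * 1 :=
          mul_le_mul (hcf _) h2 (abs_nonneg _) (by norm_num)
        _ = 1 := by norm_num
    _ = ((J - (J/(2*H))*(2*H) : ℕ) : ℝ) := by rw [Finset.sum_const, Nat.card_Ico]; simp
    _ ≤ 2*H := by
        have h6 := Nat.mod_lt J hB
        have h3 : J - (J/(2*H))*(2*H) = J % (2*H) := by
          have h4 := Nat.div_add_mod J (2*H)
          have h5 : J/(2*H)*(2*H) = 2*H*(J/(2*H)) := Nat.mul_comm _ _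
          omega
        rw [h3]
        exact_mod_cast h6.le

lemma cross_sum_bound (θ : ℕ → ℕ → ℝ) (hθ : ∀ m k, θ m k = 1 ∨ θ m k = -1)
    {n m m' : ℕ} (hmm : m < m') (hm' : m' < n) (J : ℕ) :
    |∑ j ∈ Finset.range J, eps θ n m j * eps θ n m' j| ≤ ((2^(n-m') : ℕ) : ℝ) := by
  set H := 2^(n-m'-1) with hHdef
  have hH : 0 < H := Nat.pow_pos (by norm_num)
  have h2H : 2*H = 2^(n-m') := by rw [hHdef, ← pow_succ']; congr 1; omega
  set cf : ℕ → ℝ := fun a => θ m (a / 2^(m'-m)) *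
    ((if a / 2^(m'-m-1) % 2 = 0 then (1:ℝ) else -1) * θ m' a) with hcfdef
  have hcf : ∀ a, |cf a| ≤ 1 := by
    intro a
    rw [hcfdef]
    rcases hθ m (a / 2^(m'-m)) with h|h <;> rcases hθ m' a with h'|h' <;>
      simp only [h, h'] <;> split_ifs <;> norm_num
  have hterm : ∀ j, eps θ n m j * eps θ n m' j
      = cf (j/(2*H)) * (if j/H % 2 = 0 then (1:ℝ) else -1) := by
    intro j
    have e1 : j / 2^(n-m) = j / (2*H) / 2^(m'-m) := by
      rw [h2H, Nat.div_div_eq_div_mul, ← pow_add, show n-m'+(m'-m) = n-m by omega]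
    have e2 : j / 2^(n-m-1) = j / (2*H) / 2^(m'-m-1) := by
      rw [h2H, Nat.div_div_eq_div_mul, ← pow_add, show n-m'+(m'-m-1) = n-m-1 by omega]
    have e3 : j / 2^(n-m'-1) = j / H := by rw [hHdef]
    have e4 : j / 2^(n-m') = j / (2*H) := by rw [h2H]
    unfold eps sgn
    rw [e1, e2, e3, e4, hcfdef]
    ring
  rw [Finset.sum_congr rfl (fun j _ => hterm j)]
  calc |∑ j ∈ Finset.range J, cf (j/(2*H)) * (if j/H % 2 = 0 then (1:ℝ) else -1)|
      ≤ 2*(H:ℝ) := partial_bound cf hcf J hH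
    _ = ((2^(n-m') : ℕ) : ℝ) := by rw [← h2H]; push_cast; ring

lemma ccpow {n m m' : ℕ} (hmm : m < m') (hm' : m' < n) :
    c n m * c n m' * ((2^(n-m') : ℕ) : ℝ) ≤ ((2:ℝ)^n)⁻¹ := by
  have h1 : ((2^(n-m'):ℕ):ℝ) = (2:ℝ) ^ ((((n-m':ℕ))):ℝ) := by
    rw [Real.rpow_natCast]; push_cast; ring
  have h2 : ((2:ℝ)^n)⁻¹ = (2:ℝ) ^ (-(n:ℝ)) := by
    rw [← Real.rpow_natCast 2 n, ← Real.rpow_neg (by norm_num)]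
  unfold c
  rw [h1, h2, ← Real.rpow_add two_pos, ← Real.rpow_add two_pos]
  apply Real.rpow_le_rpow_of_exponent_le one_le_two
  rw [Nat.cast_sub hm'.le]
  have hm1 : (m:ℝ) ≤ m' := by exact_mod_cast hmm.le
  have hm2 : (m':ℝ) ≤ n := by exact_mod_cast hm'.le
  linarith

lemma pair_bound (θ : ℕ → ℕ → ℝ) (hθ : ∀ m k, θ m k = 1 ∨ θ m k = -1)
    {n m m' : ℕ} (hne : m ≠ m') (hm : m < n) (hm' : m' < n) (J : ℕ) :
    |∑ j ∈ Finset.range J, (eps θ n m j * c n m) * (eps θ n m' j * c n m')|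
      ≤ ((2:ℝ)^n)⁻¹ := by
  have haux : ∀ m m' : ℕ, m < m' → m' < n →
      |∑ j ∈ Finset.range J, (eps θ n m j * c n m) * (eps θ n m' j * c n m')|
        ≤ ((2:ℝ)^n)⁻¹ := by
    intro m m' hmm hm'
    have key : ∑ j ∈ Finset.range J, (eps θ n m j * c n m) * (eps θ n m' j * c n m')
        = (c n m * c n m') * ∑ j ∈ Finset.range J, eps θ n m j * eps θ n m' j := by
      rw [Finset.mul_sum]
      apply Finset.sum_congr rfl
      intro j _
      ring
    rw [key, abs_mul, abs_of_pos (mul_pos (c_pos n m) (c_pos n m'))]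
    calc c n m * c n m' * |∑ j ∈ Finset.range J, eps θ n m j * eps θ n m' j|
        ≤ c n m * c n m' * ((2^(n-m') : ℕ) : ℝ) := by
          apply mul_le_mul_of_nonneg_left (cross_sum_bound θ hθ hmm hm' J)
          exact le_of_lt (mul_pos (c_pos n m) (c_pos n m'))
      _ ≤ ((2:ℝ)^n)⁻¹ := ccpow hmm hm'
  rcases Nat.lt_or_ge m m' with h | h
  · exact haux m m' h hm'
  · have h' : m' < m := lt_of_le_of_ne h (Ne.symm hne)
    have hswap : ∑ j ∈ Finset.range J, (eps θ n m j * c n m) * (eps θ n m' j * c n m')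
        = ∑ j ∈ Finset.range J, (eps θ n m' j * c n m') * (eps θ n m j * c n m) :=
      Finset.sum_congr rfl (fun j _ => by ring)
    rw [hswap]
    exact haux m' m h' hm

lemma c_mul_self (n m : ℕ) : c n m * c n m = (2:ℝ)^m / 4^n := by
  unfold c
  rw [← Real.rpow_add two_pos]
  have h4 : (4:ℝ)^n = (2:ℝ)^((2*n : ℕ):ℝ) := by
    rw [Real.rpow_natCast, pow_mul]; norm_num
  rw [show (m:ℝ)/2 - n + ((m:ℝ)/2 - n) = (m:ℝ) - ((2*n:ℕ):ℝ) by push_cast; ring,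
    Real.rpow_sub two_pos, h4, Real.rpow_natCast]

lemma K_val (n : ℕ) : ∑ m ∈ Finset.range n, (c n m * c n m) = ((2:ℝ)^n - 1)/4^n := by
  have : ∀ m ∈ Finset.range n, c n m * c n m = (2:ℝ)^m / 4^n := fun m _ => c_mul_self n m
  rw [Finset.sum_congr rfl this, ← Finset.sum_div, geom_sum_eq (by norm_num : (2:ℝ) ≠ 1)]
  norm_num

end QV17

open QV17 in
theorem stmt_17 (x : ℝ → ℝ) (hx : x ∈ mathcalX) (t : ℝ) (ht : t ∈ Set.Icc (0 : ℝ) 1) :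
    Filter.Tendsto (fun n => qv x n t) Filter.atTop (nhds t) := by
  obtain ⟨θ, hθ, hrepr⟩ := hx
  obtain ⟨ht0, ht1⟩ := ht
  have key : ∀ n : ℕ, |qv x n t - t| ≤ ((n:ℝ)^2 + 2) / 2^n := by
    intro n
    have hPpos : (0:ℝ) < 2^n := by positivity
    have hP1 : (1:ℝ) ≤ 2^n := by
      calc (1:ℝ) = 1^n := (one_pow n).symm
      _ ≤ 2^n := pow_le_pow_left₀ (by norm_num) (by norm_num) n
    set J := min (2^n) (Nat.floor ((2^n : ℝ) * t) + 1) with hJdef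
    have hJle : J ≤ 2^n := min_le_left _ _
    have hfil : (Finset.range (2^n)).filter (fun j : ℕ => (j:ℝ) * 2 ^ (-(n:ℤ)) ≤ t)
        = Finset.range J := by
      ext j
      simp only [Finset.mem_filter, Finset.mem_range]
      have hiff : ((j:ℝ) * 2 ^ (-(n:ℤ)) ≤ t) ↔ (j ≤ Nat.floor ((2^n:ℝ)*t)) := by
        rw [Nat.le_floor_iff (by positivity),
          show ((2:ℝ)) ^ (-(n:ℤ)) = ((2:ℝ)^n)⁻¹ by rw [zpow_neg, zpow_natCast],
          mul_inv_le_iff₀ hPpos, mul_comm t]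
      constructor
      · rintro ⟨h1, h2⟩
        rw [hiff] at h2
        omega
      · intro hjJ
        have h1 : j < 2^n := lt_of_lt_of_le hjJ hJle
        exact ⟨h1, hiff.mpr (by omega)⟩
    have hqv : qv x n t = ∑ j ∈ Finset.range J,
        (∑ m ∈ Finset.range n, eps θ n m j * c n m)^2 := by
      unfold qv
      rw [← Finset.sum_filter, hfil]
      apply Finset.sum_congr rfl
      intro j hj
      have hjn : j < 2^n := lt_of_lt_of_le (Finset.mem_range.mp hj) hJle
      rw [incr_eq θ x hrepr hjn]
    have hsq : ∀ j, (∑ m ∈ Finset.range n, eps θ n m j * c n m)^2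
        = ((2:ℝ)^n - 1)/4^n
          + ∑ m ∈ Finset.range n, ∑ m' ∈ (Finset.range n).erase m,
              (eps θ n m j * c n m) * (eps θ n m' j * c n m') := by
      intro j
      rw [sq, Finset.sum_mul_sum, ← K_val n, ← Finset.sum_add_distrib]
      apply Finset.sum_congr rfl
      intro m hm
      rw [← Finset.add_sum_erase _ _ hm]
      congr 1
      calc (eps θ n m j * c n m) * (eps θ n m j * c n m)
          = (eps θ n m j * eps θ n m j) * (c n m * c n m) := by ring
        _ = c n m * c n m := by rw [eps_mul_self θ hθ]; ring
    rw [hqv, Finset.sum_congr rfl (fun j _ => hsq j), Finset.sum_add_distrib,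
      Finset.sum_const, Finset.card_range, nsmul_eq_mul]
    -- remainder bound
    have hrem : |∑ j ∈ Finset.range J, ∑ m ∈ Finset.range n,
        ∑ m' ∈ (Finset.range n).erase m,
          (eps θ n m j * c n m) * (eps θ n m' j * c n m')| ≤ (n:ℝ)^2 / 2^n := by
      rw [Finset.sum_comm]
      have hswap : ∀ m ∈ Finset.range n,
          ∑ j ∈ Finset.range J, ∑ m' ∈ (Finset.range n).erase m,
            (eps θ n m j * c n m) * (eps θ n m' j * c n m')
          = ∑ m' ∈ (Finset.range n).erase m, ∑ j ∈ Finset.range J,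
            (eps θ n m j * c n m) * (eps θ n m' j * c n m') :=
        fun m _ => Finset.sum_comm
      rw [Finset.sum_congr rfl hswap]
      calc |∑ m ∈ Finset.range n, ∑ m' ∈ (Finset.range n).erase m,
            ∑ j ∈ Finset.range J, (eps θ n m j * c n m) * (eps θ n m' j * c n m')|
          ≤ ∑ m ∈ Finset.range n, |∑ m' ∈ (Finset.range n).erase m,
            ∑ j ∈ Finset.range J, (eps θ n m j * c n m) * (eps θ n m' j * c n m')| :=
            Finset.abs_sum_le_sum_abs _ _
        _ ≤ ∑ m ∈ Finset.range n, ∑ m' ∈ (Finset.range n).erase m,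
            |∑ j ∈ Finset.range J, (eps θ n m j * c n m) * (eps θ n m' j * c n m')| :=
            Finset.sum_le_sum (fun m _ => Finset.abs_sum_le_sum_abs _ _)
        _ ≤ ∑ m ∈ Finset.range n, ∑ m' ∈ (Finset.range n).erase m, ((2:ℝ)^n)⁻¹ := by
            apply Finset.sum_le_sum
            intro m hm
            apply Finset.sum_le_sum
            intro m' hm'
            have h1 := Finset.mem_range.mp hm
            have h2 := Finset.mem_of_mem_erase hm'
            have h3 := Finset.mem_range.mp h2
            have h4 : m' ≠ m := Finset.ne_of_mem_erase hm'
            exact pair_bound θ hθ (Ne.symm h4) h1 h3 J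
        _ ≤ (n:ℝ)^2 / 2^n := by
            have hcard : ∀ m ∈ Finset.range n,
                ∑ m' ∈ (Finset.range n).erase m, ((2:ℝ)^n)⁻¹ ≤ (n:ℝ) * ((2:ℝ)^n)⁻¹ := by
              intro m _
              rw [Finset.sum_const, nsmul_eq_mul]
              apply mul_le_mul_of_nonneg_right _ (by positivity)
              calc ((((Finset.range n).erase m).card :ℕ) : ℝ)
                  ≤ (((Finset.range n).card :ℕ) : ℝ) := by
                    exact_mod_cast Finset.card_le_card (Finset.erase_subset _ _)
                _ = (n:ℝ) := by rw [Finset.card_range]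
            calc ∑ m ∈ Finset.range n, ∑ m' ∈ (Finset.range n).erase m, ((2:ℝ)^n)⁻¹
                ≤ ∑ m ∈ Finset.range n, (n:ℝ) * ((2:ℝ)^n)⁻¹ := Finset.sum_le_sum hcard
              _ = (n:ℝ) * ((n:ℝ) * ((2:ℝ)^n)⁻¹) := by
                  rw [Finset.sum_const, Finset.card_range, nsmul_eq_mul]
              _ = (n:ℝ)^2 / 2^n := by ring
    -- main term bounds
    have hJl : (2:ℝ)^n * t ≤ (J:ℝ) := by
      rw [hJdef]
      rw [Nat.cast_min]
      apply le_min
      · have : ((2^n : ℕ) : ℝ) = (2:ℝ)^n := by push_cast; ring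
        rw [this]
        nlinarith
      · have h5 := Nat.lt_floor_add_one ((2:ℝ)^n * t)
        push_cast
        linarith
    have hJu : (J:ℝ) ≤ (2:ℝ)^n * t + 1 := by
      calc (J:ℝ) ≤ ((Nat.floor ((2^n:ℝ)*t) + 1 : ℕ) : ℝ) := by
            have h0 : J ≤ Nat.floor ((2^n:ℝ)*t) + 1 := min_le_right _ _
            exact_mod_cast h0
        _ ≤ (2:ℝ)^n * t + 1 := by
            push_cast
            have := Nat.floor_le (by positivity : (0:ℝ) ≤ (2:ℝ)^n * t)
            linarith
    have hJ2 : (J:ℝ) ≤ (2:ℝ)^n := by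
      have : ((2^n : ℕ) : ℝ) = (2:ℝ)^n := by push_cast; ring
      rw [← this]
      exact_mod_cast hJle
    have hmain : |(J:ℝ) * (((2:ℝ)^n - 1)/4^n) - t| ≤ 2/2^n := by
      have h4 : (4:ℝ)^n = 2^n * 2^n := by rw [← mul_pow]; norm_num
      have e1 : (J:ℝ) * (((2:ℝ)^n - 1)/4^n) - t
          = ((J:ℝ)*((2:ℝ)^n - 1) - t*((2:ℝ)^n*(2:ℝ)^n)) / ((2:ℝ)^n*(2:ℝ)^n) := by
        rw [h4]; field_simp
      have hnum : |(J:ℝ)*((2:ℝ)^n - 1) - t*((2:ℝ)^n*(2:ℝ)^n)| ≤ 2*(2:ℝ)^n := by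
        rw [abs_le]
        constructor
        · nlinarith [mul_le_mul_of_nonneg_right hJl (by linarith : (0:ℝ) ≤ (2:ℝ)^n - 1),
            mul_nonneg hPpos.le (by linarith : (0:ℝ) ≤ 2 - t)]
        · nlinarith [mul_le_mul_of_nonneg_right hJu (by linarith : (0:ℝ) ≤ (2:ℝ)^n - 1),
            mul_nonneg ht0 hPpos.le]
      rw [e1, abs_div, abs_of_pos (by positivity : (0:ℝ) < (2:ℝ)^n*(2:ℝ)^n),
        div_le_div_iff₀ (by positivity) hPpos]
      calc |(J:ℝ)*((2:ℝ)^n - 1) - t*((2:ℝ)^n*(2:ℝ)^n)| * 2^n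
          ≤ (2*(2:ℝ)^n) * 2^n := mul_le_mul_of_nonneg_right hnum hPpos.le
        _ = 2*((2:ℝ)^n*(2:ℝ)^n) := by ring
    calc |(J:ℝ) * (((2:ℝ)^n - 1)/4^n) + (∑ j ∈ Finset.range J, ∑ m ∈ Finset.range n,
            ∑ m' ∈ (Finset.range n).erase m,
              (eps θ n m j * c n m) * (eps θ n m' j * c n m')) - t|
        ≤ |(J:ℝ) * (((2:ℝ)^n - 1)/4^n) - t| + |∑ j ∈ Finset.range J, ∑ m ∈ Finset.range n,
            ∑ m' ∈ (Finset.range n).erase m,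
              (eps θ n m j * c n m) * (eps θ n m' j * c n m')| := by
          rw [show (J:ℝ) * (((2:ℝ)^n - 1)/4^n) + (∑ j ∈ Finset.range J, ∑ m ∈ Finset.range n,
            ∑ m' ∈ (Finset.range n).erase m,
              (eps θ n m j * c n m) * (eps θ n m' j * c n m')) - t
            = ((J:ℝ) * (((2:ℝ)^n - 1)/4^n) - t) + (∑ j ∈ Finset.range J, ∑ m ∈ Finset.range n,
            ∑ m' ∈ (Finset.range n).erase m,
              (eps θ n m j * c n m) * (eps θ n m' j * c n m')) by ring]
          exact abs_add_le _ _
      _ ≤ 2/2^n + (n:ℝ)^2 / 2^n := add_le_add hmain hrem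
      _ = ((n:ℝ)^2 + 2) / 2^n := by ring
  -- conclusion from the bound
  have hb : Filter.Tendsto (fun n : ℕ => ((n:ℝ)^2 + 2)/2^n) Filter.atTop (nhds 0) := by
    have h1 := tendsto_pow_const_div_const_pow_of_one_lt 2 (by norm_num : (1:ℝ) < 2)
    have h2 := tendsto_pow_const_div_const_pow_of_one_lt 0 (by norm_num : (1:ℝ) < 2)
    have h3 := h1.add (h2.const_mul (2:ℝ))
    rw [show (0:ℝ) + 2*0 = 0 by norm_num] at h3
    apply h3.congr
    intro n
    rw [pow_zero]
    ring
  have habs : Filter.Tendsto (fun n : ℕ => |qv x n t - t|) Filter.atTop (nhds 0) :=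
    squeeze_zero (fun n => abs_nonneg _) key hb
  rw [tendsto_iff_dist_tendsto_zero]
  simpa [Real.dist_eq] using habs
end
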